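/- Let 1 < q < p, and let I, F, f, A > 0 satisfy the inequality I ≤ f^p − (p/(p−q)) f^{p−q} A + (p/(p−q)) I^{(p−q)/p} F^{q/p}, together with f^q ≤ A and A^{p/q} ≤ F. Then (I/F)^{1/p} ≤ h^{−1}(k(f,A,F)), i.e., I ≤ F · (h^{−1}((p f^{p−q} A − (p−q) f^p)/F))^p, where h : [1, ∞) → (−∞, q] is h(t) = p t^{p−q} − (p−q) t^p (a strictly decreasing bijection) and h^{−1} is its inverse, provided additionally that I ≥ F (so that (I/F)^{1/p} ≥ 1). -/

import Mathlib

open Real Set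

lemma h_strictAnti (p q : ℝ) (hq : 0 < q) (hqp : q < p) :
    StrictAntiOn (fun t : ℝ => p * t ^ (p - q) - (p - q) * t ^ p) (Set.Ici 1) := by
  have hp : 0 < p := hq.trans hqp
  apply strictAntiOn_of_deriv_neg (convex_Ici 1)
  · intro x hx
    have hx0 : x ≠ 0 := by
      have : (1:ℝ) ≤ x := hx
      linarith
    have c1 : ContinuousAt (fun t : ℝ => p * t ^ (p - q) - (p - q) * t ^ p) x :=
      ((Real.continuousAt_rpow_const x (p - q) (Or.inl hx0)).const_mul p).sub
        ((Real.continuousAt_rpow_const x p (Or.inl hx0)).const_mul (p - q))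
    exact c1.continuousWithinAt
  · intro x hx
    rw [interior_Ici] at hx
    have hx1 : 1 < x := hx
    have hx0 : 0 < x := lt_trans one_pos hx1
    have hd1 : HasDerivAt (fun t : ℝ => t ^ (p - q)) ((p - q) * x ^ (p - q - 1)) x :=
      Real.hasDerivAt_rpow_const (Or.inl hx0.ne')
    have hd2 : HasDerivAt (fun t : ℝ => t ^ p) (p * x ^ (p - 1)) x :=
      Real.hasDerivAt_rpow_const (Or.inl hx0.ne')
    have hd : HasDerivAt (fun t : ℝ => p * t ^ (p - q) - (p - q) * t ^ p)
        (p * ((p - q) * x ^ (p - q - 1)) - (p - q) * (p * x ^ (p - 1))) x :=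
      (hd1.const_mul p).sub (hd2.const_mul (p - q))
    rw [hd.deriv]
    have hlt : x ^ (p - q - 1) < x ^ (p - 1) :=
      Real.rpow_lt_rpow_of_exponent_lt hx1 (by linarith)
    nlinarith [mul_pos hp (sub_pos.mpr hqp)]

theorem upper_bound_from_inequality (p q I F f A : ℝ) (hq : 1 < q) (hqp : q < p)
    (hI : 0 < I) (hF : 0 < F) (hf : 0 < f) (hA : 0 < A)
    (hineq : I ≤ f ^ p - (p / (p - q)) * f ^ (p - q) * A +
      (p / (p - q)) * I ^ ((p - q) / p) * F ^ (q / p))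
    (hfA : f ^ q ≤ A) (hAF : A ^ (p / q) ≤ F) (hFI : F ≤ I) :
    ∀ t : ℝ, 1 ≤ t →
      p * t ^ (p - q) - (p - q) * t ^ p =
        (p * f ^ (p - q) * A - (p - q) * f ^ p) / F →
      I ≤ F * t ^ p := by
  intro t ht hht
  have hp : 0 < p := by linarith
  have hpq : 0 < p - q := by linarith
  have hIF : 0 < I / F := div_pos hI hF
  set s : ℝ := (I / F) ^ (1 / p) with hs_def
  have hs1 : 1 ≤ s := Real.one_le_rpow ((one_le_div hF).mpr hFI) (by positivity)
  have hs0 : 0 < s := lt_of_lt_of_le one_pos hs1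
  have hsp : s ^ p = I / F := by
    rw [hs_def, ← Real.rpow_mul hIF.le, one_div_mul_cancel hp.ne', Real.rpow_one]
  have hFsp : F * s ^ p = I := by
    rw [hsp]; field_simp
  have hspq : s ^ (p - q) = I ^ ((p - q) / p) / F ^ ((p - q) / p) := by
    rw [hs_def, ← Real.rpow_mul hIF.le,
      show 1 / p * (p - q) = (p - q) / p by ring, Real.div_rpow hI.le hF.le]
  have hFsplit : F ^ ((p - q) / p) * F ^ (q / p) = F := by
    rw [← Real.rpow_add hF, show (p - q) / p + q / p = 1 by field_simp; ring, Real.rpow_one]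
  have hkey : I ^ ((p - q) / p) * F ^ (q / p) = F * s ^ (p - q) := by
    rw [hspq]
    have hFa : (0:ℝ) < F ^ ((p - q) / p) := Real.rpow_pos_of_pos hF _
    field_simp
    linear_combination hFsplit
  have e1 : (p / (p - q)) * I ^ ((p - q) / p) * F ^ (q / p)
      = (p / (p - q)) * (F * s ^ (p - q)) := by rw [mul_assoc, hkey]
  have h2 : I ≤ f ^ p - (p / (p - q)) * f ^ (p - q) * A
      + (p / (p - q)) * (F * s ^ (p - q)) := by linarith [hineq, e1]
  have h2' : (p - q) * I ≤ (p - q) * f ^ p - p * f ^ (p - q) * A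
      + p * (F * s ^ (p - q)) := by
    have h3 := mul_le_mul_of_nonneg_left h2 hpq.le
    calc (p - q) * I
        ≤ (p - q) * (f ^ p - (p / (p - q)) * f ^ (p - q) * A
            + (p / (p - q)) * (F * s ^ (p - q))) := h3
      _ = (p - q) * f ^ p - p * f ^ (p - q) * A + p * (F * s ^ (p - q)) := by
          field_simp
  have hks : (p * f ^ (p - q) * A - (p - q) * f ^ p) / F
      ≤ p * s ^ (p - q) - (p - q) * s ^ p := by
    rw [div_le_iff₀ hF]
    nlinarith [h2', hFsp]
  by_contra hcon
  push_neg at hcon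
  have htp : t ^ p < s ^ p := by
    rw [hsp, lt_div_iff₀ hF]; linarith
  have hts : t < s := by
    by_contra hle
    push_neg at hle
    exact absurd (Real.rpow_le_rpow hs0.le hle hp.le) (not_le.mpr htp)
  have hanti := h_strictAnti p q (by linarith) hqp (mem_Ici.mpr ht) (mem_Ici.mpr hs1) hts
  simp only at hanti
  linarith [hks, hht, hanti]
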